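/- For real numbers a, b, c > 0, the double integral over (0,1)×(0,1) of u1^{a-1} u2^{b-1} (1-u1)^{b+c-1} (1-u2)^{a+c-1} (1 - u1·u2)^{-(a+b+c)} du1 du2 equals Γ(a)Γ(b)Γ(c)/Γ(a+b+c). -/

import Mathlib

open MeasureTheory

lemma betaReal {p q : ℝ} (hp : 0 < p) (hq : 0 < q) :
    ∫ x in Set.Ioo (0:ℝ) 1, x ^ (p - 1) * (1 - x) ^ (q - 1) =
      Real.Gamma p * Real.Gamma q / Real.Gamma (p + q) := by
  have key : Complex.betaIntegral p q =
      ((∫ x in (0:ℝ)..1, x ^ (p-1) * (1-x) ^ (q-1) : ℝ) : ℂ) := by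
    rw [Complex.betaIntegral, ← intervalIntegral.integral_ofReal]
    apply intervalIntegral.integral_congr
    intro x hx
    rw [Set.uIcc_of_le zero_le_one] at hx
    push_cast
    rw [Complex.ofReal_cpow hx.1, Complex.ofReal_cpow (by linarith [hx.2] : (0:ℝ) ≤ 1 - x)]
    push_cast
    ring
  have h2 := Complex.Gamma_mul_Gamma_eq_betaIntegral
    (s := (p:ℂ)) (t := (q:ℂ)) (by simpa using hp) (by simpa using hq)
  rw [key] at h2
  rw [← Complex.ofReal_add, Complex.Gamma_ofReal, Complex.Gamma_ofReal, Complex.Gamma_ofReal] at h2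
  have h3 : Real.Gamma p * Real.Gamma q =
      Real.Gamma (p+q) * ∫ x in (0:ℝ)..1, x ^ (p-1) * (1-x) ^ (q-1) := by
    exact_mod_cast h2
  have hpos := Real.Gamma_pos_of_pos (by linarith : (0:ℝ) < p + q)
  rw [intervalIntegral.integral_of_le zero_le_one, integral_Ioc_eq_integral_Ioo] at h3
  field_simp
  linarith [h3]

lemma inner_int (a b c x : ℝ) (ha : 0 < a) (hb : 0 < b) (hc : 0 < c)
    (hx0 : 0 < x) (hx1 : x < 1) :
    ∫ t in Set.Ioo (0:ℝ) 1, t ^ (b-1) * (1-t) ^ (a+c-1) * (1 - x*t) ^ (-(a+b+c)) =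
      (1-x) ^ (-b) * (Real.Gamma b * Real.Gamma (a+c) / Real.Gamma (a+b+c)) := by
  have h1x : (0:ℝ) < 1 - x := by linarith
  set φ : ℝ → ℝ := fun v => v / (1 - x + x*v) with hφ
  have hDpos : ∀ v : ℝ, 0 < v → (0:ℝ) < 1 - x + x*v := fun v hv => by nlinarith
  have himg : φ '' Set.Ioo 0 1 = Set.Ioo (0:ℝ) 1 := by
    ext t
    constructor
    · rintro ⟨v, ⟨hv0, hv1⟩, rfl⟩
      have hD := hDpos v hv0
      constructor
      · positivity
      · rw [div_lt_one hD]; nlinarith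
    · rintro ⟨ht0, ht1⟩
      have hxt : (0:ℝ) < 1 - x*t := by nlinarith
      refine ⟨t*(1-x)/(1-x*t), ⟨by positivity, ?_⟩, ?_⟩
      · rw [div_lt_one hxt]; nlinarith
      · have hden : 1 - x + x * (t*(1-x)/(1-x*t)) = (1-x)/(1-x*t) := by
          field_simp; ring
        simp only [hφ]
        rw [hden]
        rw [div_div_div_eq, mul_comm (1-x*t) (1-x), mul_div_mul_right _ _ hxt.ne',
          mul_div_assoc, div_self h1x.ne', mul_one]
  have hderiv : ∀ v ∈ Set.Ioo (0:ℝ) 1,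
      HasDerivWithinAt φ ((1-x)/(1-x+x*v)^2) (Set.Ioo 0 1) v := by
    intro v hv
    have hD := hDpos v hv.1
    have h1 : HasDerivAt (fun v : ℝ => 1 - x + x*v) x v := by
      simpa using (((hasDerivAt_id v).const_mul x).const_add (1-x))
    have h := (hasDerivAt_id v).div h1 hD.ne'
    have : HasDerivAt φ ((1*(1-x+x*v) - v*x)/(1-x+x*v)^2) v := by
      simpa [hφ, Pi.div_def] using h
    have he : (1*(1-x+x*v) - v*x)/(1-x+x*v)^2 = (1-x)/(1-x+x*v)^2 := by
      congr 1; ring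
    rw [he] at this
    exact this.hasDerivWithinAt
  have hinj : Set.InjOn φ (Set.Ioo 0 1) := by
    intro v1 h1 v2 h2 he
    have hD1 := hDpos v1 h1.1
    have hD2 := hDpos v2 h2.1
    simp only [hφ] at he
    rw [div_eq_div_iff hD1.ne' hD2.ne'] at he
    nlinarith
  rw [← himg, integral_image_eq_integral_abs_deriv_smul measurableSet_Ioo hderiv hinj]
  have hpt : ∀ v ∈ Set.Ioo (0:ℝ) 1,
      |(1-x)/(1-x+x*v)^2| •
        (φ v ^ (b-1) * (1 - φ v) ^ (a+c-1) * (1 - x * φ v) ^ (-(a+b+c))) =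
      (1-x) ^ (-b) * (v ^ (b-1) * (1-v) ^ (a+c-1)) := by
    rintro v ⟨hv0, hv1⟩
    have hD := hDpos v hv0
    have h1v : (0:ℝ) < 1 - v := by linarith
    have e1 : 1 - φ v = (1-x)*(1-v)/(1-x+x*v) := by
      simp only [hφ]; field_simp; try ring
    have e2 : 1 - x * φ v = (1-x)/(1-x+x*v) := by
      simp only [hφ]; field_simp; try ring
    rw [e1, e2, smul_eq_mul, abs_of_pos (by positivity)]
    simp only [hφ]
    rw [Real.div_rpow hv0.le hD.le, Real.div_rpow (by positivity) hD.le,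
      Real.div_rpow h1x.le hD.le, Real.mul_rpow h1x.le h1v.le]
    rw [show (1-x) / ((1-x+x*v):ℝ)^2 = (1-x)^((1:ℝ)) / (1-x+x*v) ^ ((2:ℕ):ℝ) from by
      rw [Real.rpow_one, Real.rpow_natCast]]
    push_cast
    simp only [Real.rpow_def_of_pos h1x, Real.rpow_def_of_pos hD,
      Real.rpow_def_of_pos hv0, Real.rpow_def_of_pos h1v,
      div_eq_mul_inv, ← Real.exp_neg, ← Real.exp_add]
    rw [Real.exp_eq_exp]
    ring
  rw [setIntegral_congr_fun measurableSet_Ioo hpt, integral_const_mul,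
    betaReal hb (by linarith : (0:ℝ) < a + c), show b + (a+c) = a+b+c from by ring]

theorem stmt_6 (a b c : ℝ) (ha : 0 < a) (hb : 0 < b) (hc : 0 < c) :
    ∫ u1 in Set.Ioo (0 : ℝ) 1, ∫ u2 in Set.Ioo (0 : ℝ) 1,
        u1 ^ (a - 1) * u2 ^ (b - 1) * (1 - u1) ^ (b + c - 1) * (1 - u2) ^ (a + c - 1) *
          (1 - u1 * u2) ^ (-(a + b + c)) =
      Real.Gamma a * Real.Gamma b * Real.Gamma c / Real.Gamma (a + b + c) := by
  set B1 : ℝ := Real.Gamma b * Real.Gamma (a+c) / Real.Gamma (a+b+c) with hB1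
  have hout : ∀ u1 ∈ Set.Ioo (0:ℝ) 1,
      (∫ u2 in Set.Ioo (0 : ℝ) 1,
        u1 ^ (a - 1) * u2 ^ (b - 1) * (1 - u1) ^ (b + c - 1) * (1 - u2) ^ (a + c - 1) *
          (1 - u1 * u2) ^ (-(a + b + c))) =
      B1 * (u1 ^ (a-1) * (1 - u1) ^ (c-1)) := by
    rintro u1 ⟨h0, h1⟩
    have h1u : (0:ℝ) < 1 - u1 := by linarith
    have step1 : ∀ u2 : ℝ,
        u1 ^ (a - 1) * u2 ^ (b - 1) * (1 - u1) ^ (b + c - 1) * (1 - u2) ^ (a + c - 1) *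
          (1 - u1 * u2) ^ (-(a + b + c)) =
        (u1 ^ (a-1) * (1-u1) ^ (b+c-1)) *
          (u2 ^ (b-1) * (1-u2) ^ (a+c-1) * (1 - u1*u2) ^ (-(a+b+c))) := by
      intro u2; ring
    simp only [step1]
    rw [integral_const_mul, inner_int a b c u1 ha hb hc h0 h1]
    rw [show u1 ^ (a-1) * (1-u1) ^ (b+c-1) * ((1-u1) ^ (-b) * B1) =
      B1 * (u1 ^ (a-1) * ((1-u1) ^ (b+c-1) * (1-u1) ^ (-b))) from by ring,
      ← Real.rpow_add h1u, show b+c-1 + -b = c-1 from by ring]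
  rw [setIntegral_congr_fun measurableSet_Ioo hout, integral_const_mul, betaReal ha hc]
  have h1 := (Real.Gamma_pos_of_pos (by linarith : (0:ℝ) < a + c)).ne'
  have h2 := (Real.Gamma_pos_of_pos (by linarith : (0:ℝ) < a + b + c)).ne'
  rw [hB1]
  field_simp
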